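/- Let N be a Poisson(λ) random variable (λ > 0), let (Y_m)_{m≥1} be i.i.d. real random variables independent of N with |Y_1| ≤ C almost surely (C > 0), and set X := λ^{−1} ∑_{m=1}^{N} Y_m. Then E[X] = E[Y_1], and for every real s with |s| · C ≤ λ: E[ exp( s (X − E[Y_1]) ) ] ≤ exp( s² E[Y_1²] / λ ) ≤ exp( s² C² / λ ). -/

import Mathlib

open MeasureTheory ProbabilityTheory Real NNReal ENNReal

private lemma aux_exp_quad {u : ℝ} (hu : |u| ≤ 1) : Real.exp u ≤ 1 + u + u ^ 2 := by
  have h := Real.exp_bound hu (by norm_num : (0:ℕ) < 2)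
  simp [Finset.sum_range_succ] at h
  rw [abs_le] at h
  nlinarith [sq_abs u, abs_nonneg u, sq_nonneg u]

private lemma aux_split {Ω : Type*} [MeasurableSpace Ω] (P : Measure Ω) [IsProbabilityMeasure P]
    (N : Ω → ℕ) (hN : Measurable N)
    (Yseq : Ω → ℕ → ℝ) (hYs : Measurable Yseq)
    (hNY : IndepFun N Yseq P)
    (G : ℕ → (ℕ → ℝ) → ℝ) (hG : ∀ n, Measurable (G n))
    (B : ℕ → ℝ) (hB0 : ∀ n, 0 ≤ B n)
    (hGB : ∀ n, ∀ᵐ ω ∂P, |G n (Yseq ω)| ≤ B n)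
    (hsum : Summable fun n => (P (N ⁻¹' {n})).toReal * B n) :
    ∫ ω, G (N ω) (Yseq ω) ∂P = ∑' n, (P (N ⁻¹' {n})).toReal * ∫ ω, G n (Yseq ω) ∂P := by
  classical
  set f : ℕ → Ω → ℝ := fun n ω => (if N ω = n then (1:ℝ) else 0) * G n (Yseq ω) with hf
  have hind : ∀ n, (fun ω => (if N ω = n then (1:ℝ) else 0))
      = fun ω => (N ⁻¹' {n}).indicator (fun _ => (1:ℝ)) ω := by
    intro n; funext ω
    simp [Set.indicator_apply, Set.mem_preimage, Set.mem_singleton_iff]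
  have hmeasN : ∀ n : ℕ, MeasurableSet (N ⁻¹' {n}) := fun n => hN (measurableSet_singleton n)
  have hmeasf : ∀ n, AEStronglyMeasurable (f n) P := by
    intro n
    apply Measurable.aestronglyMeasurable
    exact (Measurable.ite (hmeasN n) measurable_const measurable_const).mul ((hG n).comp hYs)
  have hpt : ∀ ω, G (N ω) (Yseq ω) = ∑' n, f n ω := by
    intro ω
    rw [tsum_eq_single (N ω) (fun n hn => by simp [hf, Ne.symm hn])]
    simp [hf]
  have hlin : ∀ n, ∫⁻ ω, ‖f n ω‖₊ ∂P ≤ ENNReal.ofReal (B n) * P (N ⁻¹' {n}) := by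
    intro n
    have hb : ∀ᵐ ω ∂P, (‖f n ω‖₊ : ℝ≥0∞)
        ≤ (N ⁻¹' {n}).indicator (fun _ => ENNReal.ofReal (B n)) ω := by
      filter_upwards [hGB n] with ω hω
      by_cases h : N ω = n
      · simp only [Set.indicator_apply, Set.mem_preimage, Set.mem_singleton_iff, h, if_true]
        rw [← enorm_eq_nnnorm, ← ofReal_norm_eq_enorm]
        refine ENNReal.ofReal_le_ofReal ?_
        simp only [hf, h, if_true, one_mul, Real.norm_eq_abs]
        exact hω
      · simp [hf, h, Set.indicator_apply]
    calc ∫⁻ ω, ‖f n ω‖₊ ∂P ≤ ∫⁻ ω, (N ⁻¹' {n}).indicator (fun _ => ENNReal.ofReal (B n)) ω ∂P :=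
          lintegral_mono_ae hb
      _ = ENNReal.ofReal (B n) * P (N ⁻¹' {n}) := lintegral_indicator_const (hmeasN n) _
  have htop : ∑' n, ∫⁻ ω, ‖f n ω‖₊ ∂P ≠ ⊤ := by
    have h1 : ∑' n, ∫⁻ ω, ‖f n ω‖₊ ∂P ≤ ∑' n, ENNReal.ofReal ((P (N ⁻¹' {n})).toReal * B n) := by
      refine ENNReal.tsum_le_tsum fun n => (hlin n).trans (le_of_eq ?_)
      rw [ENNReal.ofReal_mul ENNReal.toReal_nonneg, mul_comm,
        ENNReal.ofReal_toReal (measure_ne_top P _)]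
    refine ne_top_of_le_ne_top ?_ h1
    rw [← ENNReal.ofReal_tsum_of_nonneg (fun n => mul_nonneg ENNReal.toReal_nonneg (hB0 n)) hsum]
    exact ENNReal.ofReal_ne_top
  have hint : ∀ n, ∫ ω, f n ω ∂P = (P (N ⁻¹' {n})).toReal * ∫ ω, G n (Yseq ω) ∂P := by
    intro n
    have hφ : Measurable (fun k : ℕ => if k = n then (1:ℝ) else 0) := measurable_from_top
    have hidp : IndepFun (fun ω => if N ω = n then (1:ℝ) else 0) (fun ω => G n (Yseq ω)) P :=
      hNY.comp hφ (hG n)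
    have heq : ∫ ω, f n ω ∂P
        = (∫ ω, (if N ω = n then (1:ℝ) else 0) ∂P) * ∫ ω, G n (Yseq ω) ∂P :=
      hidp.integral_mul_eq_mul_integral ((hφ.comp hN).aestronglyMeasurable)
        (((hG n).comp hYs).aestronglyMeasurable)
    rw [heq, hind n, integral_indicator_const _ (hmeasN n)]
    simp [measureReal_def]
  calc ∫ ω, G (N ω) (Yseq ω) ∂P = ∫ ω, ∑' n, f n ω ∂P := by simp_rw [hpt]
    _ = ∑' n, ∫ ω, f n ω ∂P := integral_tsum hmeasf htop
    _ = ∑' n, (P (N ⁻¹' {n})).toReal * ∫ ω, G n (Yseq ω) ∂P := by simp_rw [hint]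

private lemma poisson_hasSum_mean (lam : ℝ≥0) :
    HasSum (fun n => poissonPMFReal lam n * n) (lam : ℝ) := by
  have heq : (fun n : ℕ => poissonPMFReal lam (n + 1) * (n + 1))
      = fun n => (lam : ℝ) * poissonPMFReal lam n := by
    funext n
    unfold poissonPMFReal
    rw [Nat.factorial_succ]
    push_cast
    have h1 : ((n : ℝ) + 1) ≠ 0 := by positivity
    field_simp
    ring
  have h1 : HasSum (fun n : ℕ => poissonPMFReal lam (n + 1) * ((n : ℝ) + 1)) ((lam : ℝ)) := by
    have := (poissonPMFRealSum lam).mul_left (lam : ℝ)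
    rw [mul_one] at this
    exact heq ▸ this
  have h2 := (hasSum_nat_add_iff (f := fun n => poissonPMFReal lam n * n) 1).mp (by
    convert h1 using 2 with n
    · rfl
    · push_cast
      ring)
  simpa using h2

private lemma poisson_hasSum_pow (lam : ℝ≥0) (M : ℝ) :
    HasSum (fun n => poissonPMFReal lam n * M ^ n) (Real.exp ((lam : ℝ) * M - lam)) := by
  have h := (NormedSpace.expSeries_div_hasSum_exp ((lam : ℝ) * M)).mul_left
    (Real.exp (-(lam : ℝ)))
  rw [← Real.exp_eq_exp_ℝ] at h
  have heq : (fun n : ℕ => Real.exp (-(lam:ℝ)) * (((lam : ℝ) * M) ^ n / n.factorial))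
      = fun n => poissonPMFReal lam n * M ^ n := by
    funext n
    unfold poissonPMFReal
    rw [mul_pow]
    ring
  rw [heq, ← Real.exp_add] at h
  convert h using 2
  · rfl
  · ring

theorem compound_poisson_normalized_mean_and_mgf_bound
    {Ω : Type*} [MeasurableSpace Ω] (P : Measure Ω) [IsProbabilityMeasure P]
    (lam : ℝ≥0) (hlam : 0 < lam)
    (N : Ω → ℕ) (hN : Measurable N)
    (hpoisson : Measure.map N P = poissonMeasure lam)
    (Y : ℕ → Ω → ℝ) (hYmeas : ∀ m, Measurable (Y m))
    -- the `Y m` are mutually independent and identically distributed: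
    (hYindep : iIndepFun Y P)
    (hYident : ∀ m, Measure.map (Y m) P = Measure.map (Y 0) P)
    -- `N` is independent of the whole sequence `(Y_m)`:
    (hNY : IndepFun N (fun ω => fun m => Y m ω) P)
    (C : ℝ) (hC : 0 < C)
    (hbdd : ∀ m, ∀ᵐ ω ∂P, |Y m ω| ≤ C)
    (X : Ω → ℝ) (hX : X = fun ω => ((lam : ℝ))⁻¹ * ∑ m ∈ Finset.range (N ω), Y m ω) :
    (∫ ω, X ω ∂P = ∫ ω, Y 0 ω ∂P) ∧
      ∀ s : ℝ, |s| * C ≤ (lam : ℝ) →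
        (∫ ω, Real.exp (s * (X ω - ∫ ω', Y 0 ω' ∂P)) ∂P) ≤
            Real.exp (s ^ 2 * (∫ ω, (Y 0 ω) ^ 2 ∂P) / (lam : ℝ)) ∧
          Real.exp (s ^ 2 * (∫ ω, (Y 0 ω) ^ 2 ∂P) / (lam : ℝ)) ≤
            Real.exp (s ^ 2 * C ^ 2 / (lam : ℝ)) := by
  subst hX
  have hlamR : (0:ℝ) < (lam : ℝ) := by exact_mod_cast hlam
  have hlamne : ((lam : ℝ)) ≠ 0 := ne_of_gt hlamR
  set μY := ∫ ω, Y 0 ω ∂P with hμY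
  set M2 := ∫ ω, (Y 0 ω) ^ 2 ∂P with hM2def
  set Yseq : Ω → ℕ → ℝ := fun ω => fun m => Y m ω with hYseq
  have hYsm : Measurable Yseq := measurable_pi_lambda _ hYmeas
  have hpn : ∀ n, (P (N ⁻¹' {n})).toReal = poissonPMFReal lam n := by
    intro n
    rw [← Measure.map_apply hN (measurableSet_singleton n), hpoisson]
    unfold poissonMeasure
    rw [Measure.sum_smul_dirac_singleton]
    show (ENNReal.ofReal (poissonPMFReal lam n)).toReal = _
    exact ENNReal.toReal_ofReal poissonPMFReal_nonneg
  have hYint : ∀ m, Integrable (Y m) P := fun m =>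
    Integrable.mono' (integrable_const C) (hYmeas m).aestronglyMeasurable
      ((hbdd m).mono fun ω h => by rwa [Real.norm_eq_abs])
  have hEY : ∀ m, ∫ ω, Y m ω ∂P = μY := by
    intro m
    have h1 : ∫ ω, Y m ω ∂P = ∫ x, x ∂(Measure.map (Y m) P) :=
      (integral_map (hYmeas m).aemeasurable aestronglyMeasurable_id).symm
    have h2 : ∫ ω, Y 0 ω ∂P = ∫ x, x ∂(Measure.map (Y 0) P) :=
      (integral_map (hYmeas 0).aemeasurable aestronglyMeasurable_id).symm
    rw [hμY, h1, h2, hYident m]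
  have hbddall : ∀ᵐ ω ∂P, ∀ m, |Y m ω| ≤ C := (ae_all_iff).mpr hbdd
  have habs_sum : ∀ n, ∀ᵐ ω ∂P, |∑ m ∈ Finset.range n, Y m ω| ≤ n * C := by
    intro n
    filter_upwards [hbddall] with ω hω
    calc |∑ m ∈ Finset.range n, Y m ω| ≤ ∑ m ∈ Finset.range n, |Y m ω| :=
          Finset.abs_sum_le_sum_abs _ _
      _ ≤ ∑ _m ∈ Finset.range n, C := Finset.sum_le_sum fun m _ => hω m
      _ = n * C := by simp [Finset.sum_const, nsmul_eq_mul]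
  -- Part 1: the mean
  have part1 : ∫ ω, ((lam : ℝ))⁻¹ * ∑ m ∈ Finset.range (N ω), Y m ω ∂P = μY := by
    have key := aux_split P N hN Yseq hYsm hNY
      (fun n y => ((lam : ℝ))⁻¹ * ∑ m ∈ Finset.range n, y m)
      (fun n => measurable_const.mul (Finset.measurable_sum _ fun m _ => measurable_pi_apply m))
      (fun n => ((lam : ℝ))⁻¹ * (n * C))
      (fun n => by positivity)
      (fun n => by
        filter_upwards [habs_sum n] with ω hω
        rw [abs_mul, abs_inv, abs_of_pos hlamR]
        exact mul_le_mul_of_nonneg_left hω (by positivity))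
      (by
        have hs := (poisson_hasSum_mean lam).summable.mul_left (((lam : ℝ))⁻¹ * C)
        refine hs.congr fun n => ?_
        rw [hpn n]
        ring)
    have hGint : ∀ n : ℕ, ∫ ω, ((lam : ℝ))⁻¹ * ∑ m ∈ Finset.range n, Y m ω ∂P
        = ((lam : ℝ))⁻¹ * (n * μY) := by
      intro n
      rw [integral_const_mul, integral_finset_sum _ fun m _ => hYint m]
      simp_rw [hEY]
      simp [Finset.sum_const, nsmul_eq_mul]
    calc ∫ ω, ((lam : ℝ))⁻¹ * ∑ m ∈ Finset.range (N ω), Y m ω ∂P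
        = ∑' n, (P (N ⁻¹' {n})).toReal * ∫ ω, ((lam : ℝ))⁻¹ * ∑ m ∈ Finset.range n, Y m ω ∂P :=
          key
      _ = ∑' n, (((lam : ℝ))⁻¹ * μY) * (poissonPMFReal lam n * n) := by
          congr 1; funext n; rw [hpn n, hGint n]; ring
      _ = (((lam : ℝ))⁻¹ * μY) * (lam : ℝ) := by
          rw [((poisson_hasSum_mean lam).mul_left (((lam : ℝ))⁻¹ * μY)).tsum_eq]
      _ = μY := by field_simp
  refine ⟨part1, fun s hs => ?_⟩
  -- Part 2: the mgf bound
  set t : ℝ := s / (lam : ℝ) with ht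
  have htC : |t| * C ≤ 1 := by
    rw [ht, abs_div, abs_of_pos hlamR, div_mul_eq_mul_div]
    exact (div_le_one hlamR).mpr hs
  set M : ℝ := mgf (Y 0) P t with hM
  have hmgfY : ∀ m, mgf (Y m) P t = M := by
    intro m
    rw [hM]
    unfold mgf
    have h1 : ∫ ω, Real.exp (t * Y m ω) ∂P = ∫ x, Real.exp (t * x) ∂(Measure.map (Y m) P) :=
      (integral_map (hYmeas m).aemeasurable
        ((Real.measurable_exp.comp (measurable_id.const_mul t)).aestronglyMeasurable)).symm
    have h2 : ∫ ω, Real.exp (t * Y 0 ω) ∂P = ∫ x, Real.exp (t * x) ∂(Measure.map (Y 0) P) :=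
      (integral_map (hYmeas 0).aemeasurable
        ((Real.measurable_exp.comp (measurable_id.const_mul t)).aestronglyMeasurable)).symm
    rw [h1, h2, hYident m]
  -- the integral identity
  have key := aux_split P N hN Yseq hYsm hNY
    (fun n y => Real.exp (t * ∑ m ∈ Finset.range n, y m))
    (fun n => Real.measurable_exp.comp
      (measurable_const.mul (Finset.measurable_sum _ fun m _ => measurable_pi_apply m)))
    (fun n => Real.exp (|t| * (n * C)))
    (fun n => (Real.exp_pos _).le)
    (fun n => by
      filter_upwards [habs_sum n] with ω hω
      rw [abs_of_pos (Real.exp_pos _), Real.exp_le_exp]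
      calc t * ∑ m ∈ Finset.range n, Y m ω ≤ |t * ∑ m ∈ Finset.range n, Y m ω| := le_abs_self _
        _ = |t| * |∑ m ∈ Finset.range n, Y m ω| := abs_mul _ _
        _ ≤ |t| * (n * C) := mul_le_mul_of_nonneg_left hω (abs_nonneg t))
    (by
      have hs2 := (poisson_hasSum_pow lam (Real.exp (|t| * C))).summable
      refine hs2.congr fun n => ?_
      rw [hpn n]
      congr 1
      rw [← Real.exp_nat_mul]
      congr 1
      ring)
  have hGint : ∀ n : ℕ, ∫ ω, Real.exp (t * ∑ m ∈ Finset.range n, Y m ω) ∂P = M ^ n := by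
    intro n
    have h1 : ∫ ω, Real.exp (t * ∑ m ∈ Finset.range n, Y m ω) ∂P
        = mgf (∑ m ∈ Finset.range n, Y m) P t := by
      unfold mgf
      congr 1
      funext ω
      simp [Finset.sum_apply]
    rw [h1, hYindep.mgf_sum hYmeas (Finset.range n)]
    simp [hmgfY, Finset.prod_const]
  have hintexp : ∫ ω, Real.exp (t * ∑ m ∈ Finset.range (N ω), Y m ω) ∂P
      = Real.exp ((lam : ℝ) * M - lam) := by
    calc ∫ ω, Real.exp (t * ∑ m ∈ Finset.range (N ω), Y m ω) ∂P
        = ∑' n, (P (N ⁻¹' {n})).toReal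
            * ∫ ω, Real.exp (t * ∑ m ∈ Finset.range n, Y m ω) ∂P := key
      _ = ∑' n, poissonPMFReal lam n * M ^ n := by
          congr 1; funext n; rw [hpn n, hGint n]
      _ = Real.exp ((lam : ℝ) * M - lam) := (poisson_hasSum_pow lam M).tsum_eq
  have hLHS : ∫ ω, Real.exp (s * (((lam : ℝ))⁻¹ * ∑ m ∈ Finset.range (N ω), Y m ω - μY)) ∂P
      = Real.exp ((lam : ℝ) * M - lam - s * μY) := by
    have hptw : ∀ ω, Real.exp (s * (((lam : ℝ))⁻¹ * ∑ m ∈ Finset.range (N ω), Y m ω - μY))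
        = Real.exp (-(s * μY)) * Real.exp (t * ∑ m ∈ Finset.range (N ω), Y m ω) := by
      intro ω
      rw [← Real.exp_add]
      congr 1
      rw [ht, div_eq_mul_inv]
      ring
    simp_rw [hptw]
    rw [integral_const_mul, hintexp, ← Real.exp_add]
    congr 1
    ring
  -- bound on M
  have hY2int : Integrable (fun ω => (Y 0 ω) ^ 2) P :=
    Integrable.mono' (integrable_const (C ^ 2))
      ((hYmeas 0).pow_const 2).aestronglyMeasurable
      ((hbdd 0).mono fun ω h => by
        rw [Real.norm_eq_abs, abs_pow, ← sq_abs C]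
        exact pow_le_pow_left₀ (abs_nonneg _) (h.trans (le_abs_self C)) 2)
  have hM2C : M2 ≤ C ^ 2 := by
    calc M2 = ∫ ω, (Y 0 ω) ^ 2 ∂P := hM2def
      _ ≤ ∫ _ω, C ^ 2 ∂P := by
          refine integral_mono_ae hY2int (integrable_const (C ^ 2)) ?_
          filter_upwards [hbdd 0] with ω h
          rw [← sq_abs (Y 0 ω), ← sq_abs C]
          exact pow_le_pow_left₀ (abs_nonneg _) (h.trans (le_abs_self C)) 2
      _ = C ^ 2 := by simp
  have hM2nn : 0 ≤ M2 := integral_nonneg fun ω => sq_nonneg _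
  have hMle : M ≤ 1 + t * μY + t ^ 2 * M2 := by
    have hint1 : Integrable (fun ω => Real.exp (t * Y 0 ω)) P := by
      refine Integrable.mono' (integrable_const (Real.exp (|t| * C)))
        ((Real.measurable_exp.comp ((hYmeas 0).const_mul t)).aestronglyMeasurable) ?_
      filter_upwards [hbdd 0] with ω h
      rw [Real.norm_eq_abs, abs_of_pos (Real.exp_pos _), Real.exp_le_exp]
      calc t * Y 0 ω ≤ |t * Y 0 ω| := le_abs_self _
        _ = |t| * |Y 0 ω| := abs_mul _ _
        _ ≤ |t| * C := mul_le_mul_of_nonneg_left h (abs_nonneg t)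
    have hA : Integrable (fun ω => 1 + t * Y 0 ω) P :=
      (integrable_const 1).add ((hYint 0).const_mul t)
    have hB : Integrable (fun ω => t ^ 2 * (Y 0 ω) ^ 2) P := hY2int.const_mul (t ^ 2)
    have hint2 : Integrable (fun ω => 1 + t * Y 0 ω + t ^ 2 * (Y 0 ω) ^ 2) P := hA.add hB
    have hptw : ∀ᵐ ω ∂P, Real.exp (t * Y 0 ω) ≤ 1 + t * Y 0 ω + t ^ 2 * (Y 0 ω) ^ 2 := by
      filter_upwards [hbdd 0] with ω h
      have hu : |t * Y 0 ω| ≤ 1 := by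
        rw [abs_mul]
        calc |t| * |Y 0 ω| ≤ |t| * C := mul_le_mul_of_nonneg_left h (abs_nonneg t)
          _ ≤ 1 := htC
      have := aux_exp_quad hu
      calc Real.exp (t * Y 0 ω) ≤ 1 + t * Y 0 ω + (t * Y 0 ω) ^ 2 := this
        _ = 1 + t * Y 0 ω + t ^ 2 * (Y 0 ω) ^ 2 := by ring
    calc M = ∫ ω, Real.exp (t * Y 0 ω) ∂P := rfl
      _ ≤ ∫ ω, (1 + t * Y 0 ω + t ^ 2 * (Y 0 ω) ^ 2) ∂P := integral_mono_ae hint1 hint2 hptw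
      _ = 1 + t * μY + t ^ 2 * M2 := by
          rw [integral_add hA hB, integral_add (integrable_const 1) ((hYint 0).const_mul t),
            integral_const, integral_const_mul, integral_const_mul]
          simp [hμY, hM2def]
  constructor
  · rw [hLHS, Real.exp_le_exp]
    have h1 : (lam : ℝ) * M ≤ (lam : ℝ) * (1 + t * μY + t ^ 2 * M2) :=
      mul_le_mul_of_nonneg_left hMle hlamR.le
    have h2 : (lam : ℝ) * (1 + t * μY + t ^ 2 * M2) = (lam : ℝ) + s * μY + s ^ 2 * M2 / (lam : ℝ) := by
      rw [ht]
      field_simp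
    linarith
  · rw [Real.exp_le_exp]
    gcongr
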